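/- Define a simplicial complex K to be a combinatorial grape if either K has at most one vertex, or there exists a vertex a of K such that the link (K:a) is contained in a cone that is contained in the face-deletion (K,a), and both (K:a) and (K,a) are combinatorial grapes. Then for every forest F and every labelling λ : V(F) → ℕ, the bounded degree complex BD^λ(F) is a combinatorial grape. -/
import Mathlib

open Finset

/-- Degree of a vertex `v` in a finite set `H` of edges. -/
def edgeDeg {V : Type*} [DecidableEq V] (H : Finset (Sym2 V)) (v : V) : ℕ :=
  (H.filter (fun e => v ∈ e)).card

/-- The bounded degree complex `BD^λ(G)`: its faces are the finite sets `H` of edges of `G`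
such that every vertex `v` lies on at most `lam v` edges of `H`. -/
def BD {V : Type*} [DecidableEq V] (G : SimpleGraph V) (lam : V → ℕ) :
    Set (Finset (Sym2 V)) :=
  {H | ↑H ⊆ G.edgeSet ∧ ∀ v, edgeDeg H v ≤ lam v}

/-- The link `(K : a)` of the vertex `a` in `K`. -/
def linkC {α : Type*} [DecidableEq α] (K : Set (Finset α)) (a : α) : Set (Finset α) :=
  {τ | τ ∈ K ∧ a ∉ τ ∧ insert a τ ∈ K}

/-- The face-deletion `(K, a)` of the vertex `a` in `K`. -/
def delC {α : Type*} [DecidableEq α] (K : Set (Finset α)) (a : α) : Set (Finset α) :=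
  {τ | τ ∈ K ∧ a ∉ τ}

/-- The cone `C_a(L)` with apex `a`: faces are `τ ∪ s` with `τ ∈ L` and `s ⊆ {a}`. -/
def coneC {α : Type*} [DecidableEq α] (a : α) (L : Set (Finset α)) : Set (Finset α) :=
  {σ | ∃ τ ∈ L, ∃ s ⊆ ({a} : Finset α), σ = τ ∪ s}

/-- A combinatorial grape: either `K` has at most one vertex, or there is a vertex `a` such that
the link `(K : a)` is contained in a cone contained in the face-deletion `(K, a)`, and both the
link and the face-deletion are combinatorial grapes. -/
inductive IsGrape {α : Type*} [DecidableEq α] : Set (Finset α) → Prop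
  | atMostOneVertex (K : Set (Finset α)) (h : ∀ a b : α, {a} ∈ K → {b} ∈ K → a = b) :
      IsGrape K
  | wedge (K : Set (Finset α)) (a : α) (ha : {a} ∈ K)
      (hcone : ∃ (b : α) (L : Set (Finset α)), linkC K a ⊆ coneC b L ∧ coneC b L ⊆ delC K a)
      (hlink : IsGrape (linkC K a)) (hdel : IsGrape (delC K a)) : IsGrape K

section Aux

variable {V : Type*} [DecidableEq V]

private lemma edgeDeg_insert {H : Finset (Sym2 V)} {a : Sym2 V} (ha : a ∉ H) (v : V) :
    edgeDeg (insert a H) v = edgeDeg H v + if v ∈ a then 1 else 0 := by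
  unfold edgeDeg
  rw [filter_insert]
  split
  · rw [card_insert_of_notMem fun hc => ha (mem_of_mem_filter _ hc)]
  · simp

private lemma BD_subset {G : SimpleGraph V} {lam : V → ℕ} {σ τ : Finset (Sym2 V)}
    (h : σ ⊆ τ) (hτ : τ ∈ BD G lam) : σ ∈ BD G lam := by
  refine ⟨fun e he => hτ.1 (h he), fun v => le_trans ?_ (hτ.2 v)⟩
  exact card_le_card (filter_subset_filter _ h)

private lemma lam_pos_of_singleton {G : SimpleGraph V} {lam : V → ℕ} {e : Sym2 V}
    (he : {e} ∈ BD G lam) {v : V} (hv : v ∈ e) : 1 ≤ lam v := by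
  have := he.2 v
  unfold edgeDeg at this
  rwa [filter_singleton, if_pos hv, card_singleton] at this

private lemma delC_BD {G : SimpleGraph V} {lam : V → ℕ} {a : Sym2 V} :
    delC (BD G lam) a = BD (G.deleteEdges {a}) lam := by
  ext τ
  simp only [delC, BD, Set.mem_setOf_eq, SimpleGraph.edgeSet_deleteEdges]
  constructor
  · rintro ⟨⟨hsub, hdeg⟩, haτ⟩
    exact ⟨fun e he => ⟨hsub he, fun h => haτ (Finset.mem_coe.mp (Set.mem_singleton_iff.mp h ▸ he))⟩, hdeg⟩
  · rintro ⟨hsub, hdeg⟩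
    exact ⟨⟨fun e he => (hsub he).1, hdeg⟩, fun ha' => (hsub ha').2 rfl⟩

private lemma linkC_BD {G : SimpleGraph V} {lam : V → ℕ} {a : Sym2 V} (ha : {a} ∈ BD G lam) :
    linkC (BD G lam) a =
      BD (G.deleteEdges {a}) (fun v => lam v - if v ∈ a then 1 else 0) := by
  have haE : a ∈ G.edgeSet := ha.1 (by simp)
  ext τ
  simp only [linkC, BD, Set.mem_setOf_eq, SimpleGraph.edgeSet_deleteEdges]
  constructor
  · rintro ⟨⟨hsub, hdeg⟩, haτ, ⟨hsubi, hdegi⟩⟩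
    refine ⟨fun e he => ⟨hsub he, fun h => haτ (Finset.mem_coe.mp (Set.mem_singleton_iff.mp h ▸ he))⟩, fun v => ?_⟩
    have := hdegi v
    rw [edgeDeg_insert haτ] at this
    by_cases hv : v ∈ a <;> simp only [hv, if_true, if_false] at this ⊢ <;> omega
  · rintro ⟨hsub, hdeg⟩
    have haτ : a ∉ τ := fun hc => (hsub hc).2 rfl
    refine ⟨⟨fun e he => (hsub he).1, fun v => le_trans (hdeg v) (Nat.sub_le _ _)⟩, haτ,
      ⟨?_, fun v => ?_⟩⟩
    · rw [coe_insert]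
      exact Set.insert_subset haE fun e he => (hsub he).1
    · rw [edgeDeg_insert haτ]
      have := hdeg v
      by_cases hv : v ∈ a
      · have h1 := lam_pos_of_singleton ha hv
        simp only [hv, if_true] at this ⊢
        omega
      · simp only [hv, if_false] at this ⊢
        omega

end Aux

section Graph

open SimpleGraph Walk

private lemma unique_nbr {V : Type*} [DecidableEq V] {G' : SimpleGraph V} (hac : G'.IsAcyclic)
    {x u y : V} (h : G'.Adj x u) (q : G'.Walk u y)
    (hp : (Walk.cons h q).IsPath)
    (hmax : ∀ (z w : V) (r : G'.Walk z w), r.IsPath → r.length ≤ q.length + 1)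
    {z : V} (hz : G'.Adj x z) : z = u := by
  by_contra hzu
  rw [Walk.cons_isPath_iff] at hp
  obtain ⟨hq, hxq⟩ := hp
  by_cases hzs : z ∈ q.support
  · have hrp : (q.takeUntil z hzs).IsPath := hq.takeUntil hzs
    have hxr : x ∉ (q.takeUntil z hzs).support :=
      fun hc => hxq (Walk.support_takeUntil_subset _ _ hc)
    have hcp : (Walk.cons h (q.takeUntil z hzs)).IsPath := by
      rw [Walk.cons_isPath_iff]; exact ⟨hrp, hxr⟩
    have hcyc : (Walk.cons hz.symm (Walk.cons h (q.takeUntil z hzs))).IsCycle := by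
      rw [Walk.cons_isCycle_iff]
      refine ⟨hcp, ?_⟩
      rw [Walk.edges_cons, List.mem_cons]
      rintro (hmem | hmem)
      · rw [Sym2.eq_iff] at hmem
        rcases hmem with ⟨h1, h2⟩ | ⟨h1, h2⟩
        · exact hz.ne' h1
        · exact hzu h1
      · exact hxr ((q.takeUntil z hzs).snd_mem_support_of_mem_edges hmem)
    exact hac _ hcyc
  · have hzp : z ∉ (Walk.cons h q).support := by
      rw [Walk.support_cons, List.mem_cons]
      rintro (rfl | hc)
      · exact hz.ne rfl
      · exact hzs hc
    have : (Walk.cons hz.symm (Walk.cons h q)).IsPath := by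
      rw [Walk.cons_isPath_iff]
      exact ⟨(Walk.cons_isPath_iff _ _).mpr ⟨hq, hxq⟩, hzp⟩
    have hle := hmax _ _ _ this
    simp only [Walk.length_cons] at hle
    omega

private lemma exists_pendant {V : Type*} [Fintype V] [DecidableEq V] {G' : SimpleGraph V}
    (hac : G'.IsAcyclic) {e1 e2 : Sym2 V} (h1 : e1 ∈ G'.edgeSet) (h2 : e2 ∈ G'.edgeSet)
    (hne : e1 ≠ e2) :
    ∃ x u a, G'.Adj x u ∧ a ∈ G'.edgeSet ∧ a ≠ s(x, u) ∧
      (∀ e ∈ G'.edgeSet, x ∈ e → e = s(x, u)) ∧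
      (u ∈ a ∨ ∀ e ∈ G'.edgeSet, u ∈ e → e = s(x, u)) := by
  classical
  set S : Set ℕ := {n | ∃ (z w : V) (r : G'.Walk z w), r.IsPath ∧ r.length = n} with hS
  have h1S : (1 : ℕ) ∈ S := by
    obtain ⟨x0, y0, rfl⟩ : ∃ x y, e1 = s(x, y) :=
      @Sym2.ind V (fun e => ∃ x y, e = s(x, y)) (fun x y => ⟨x, y, rfl⟩) e1
    have hadj : G'.Adj x0 y0 := h1
    refine ⟨x0, y0, Walk.cons hadj Walk.nil, ?_, rfl⟩
    rw [Walk.cons_isPath_iff]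
    refine ⟨Walk.IsPath.nil, ?_⟩
    simp [hadj.ne]
  have hSbdd : BddAbove S := by
    refine ⟨Fintype.card V, ?_⟩
    rintro n ⟨z, w, r, hr, rfl⟩
    exact hr.length_lt.le
  obtain ⟨v, w, p, hp, hlen⟩ := Nat.sSup_mem ⟨1, h1S⟩ hSbdd
  have h1le : 1 ≤ p.length := by rw [hlen]; exact le_csSup hSbdd h1S
  have hmax : ∀ (z w' : V) (r : G'.Walk z w'), r.IsPath → r.length ≤ p.length := by
    intro z w' r hr
    rw [hlen]
    exact le_csSup hSbdd ⟨z, w', r, hr, rfl⟩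
  clear hlen h1S hS
  cases p with
  | nil => simp at h1le
  | @cons _ u _ h q =>
    simp only [Walk.length_cons] at hmax
    have hxuniq : ∀ z, G'.Adj v z → z = u :=
      fun z hz => unique_nbr hac h q hp hmax hz
    have hvu : v ≠ u := h.ne
    cases q with
    | nil =>
      have hp' : (Walk.cons h.symm (Walk.nil : G'.Walk v v)).IsPath := by
        rw [Walk.cons_isPath_iff]
        refine ⟨Walk.IsPath.nil, ?_⟩
        simp [h.ne']
      have huuniq : ∀ z, G'.Adj w z → z = v :=
        fun z hz => unique_nbr hac h.symm Walk.nil hp' hmax hz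
      have hxall : ∀ e ∈ G'.edgeSet, v ∈ e → e = s(v, w) := by
        rintro e he hve
        obtain ⟨z, rfl⟩ := Sym2.mem_iff_exists.mp hve
        rw [SimpleGraph.mem_edgeSet] at he
        rw [hxuniq z he]
      have huall : ∀ e ∈ G'.edgeSet, w ∈ e → e = s(v, w) := by
        rintro e he hue
        obtain ⟨z, rfl⟩ := Sym2.mem_iff_exists.mp hue
        rw [SimpleGraph.mem_edgeSet] at he
        rw [huuniq z he, Sym2.eq_swap]
      by_cases he1 : e1 = s(v, w)
      · exact ⟨v, w, e2, h, h2, fun hc => hne (he1 ▸ hc ▸ rfl), hxall, Or.inr huall⟩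
      · exact ⟨v, w, e1, h, h1, he1, hxall, Or.inr huall⟩
    | @cons _ w' _ h2' q2 =>
      refine ⟨v, u, s(u, w'), h, G'.mem_edgeSet.mpr h2', ?_, ?_, Or.inl (by simp)⟩
      · intro hc
        rw [Sym2.eq_iff] at hc
        have hxq : v ∉ (Walk.cons h2' q2).support := ((Walk.cons_isPath_iff _ _).mp hp).2
        have hws : w' ∈ (Walk.cons h2' q2).support := by
          rw [Walk.support_cons, List.mem_cons]
          exact Or.inr q2.start_mem_support
        rcases hc with ⟨hc1, hc2⟩ | ⟨hc1, hc2⟩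
        · exact hvu hc1.symm
        · exact hxq (hc2 ▸ hws)
      · rintro e he hve
        obtain ⟨z, rfl⟩ := Sym2.mem_iff_exists.mp hve
        rw [SimpleGraph.mem_edgeSet] at he
        rw [hxuniq z he]

end Graph

private theorem BD_main {V : Type*} [Fintype V] [DecidableEq V] :
    ∀ (n : ℕ) (G : SimpleGraph V), G.edgeSet.ncard ≤ n → G.IsAcyclic → ∀ lam : V → ℕ,
      IsGrape (BD G lam) := by
  intro n
  induction n with
  | zero =>
    intro G hcard hac lam
    refine IsGrape.atMostOneVertex _ fun a b ha hb => ?_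
    exfalso
    have haE : a ∈ G.edgeSet := ha.1 (by simp)
    have hE : G.edgeSet = ∅ := (Set.ncard_eq_zero (Set.toFinite _)).mp (Nat.le_zero.mp hcard)
    rw [hE] at haE
    exact haE
  | succ n ih =>
    intro G hcard hac lam
    by_cases hone : ∀ e f : Sym2 V, {e} ∈ BD G lam → {f} ∈ BD G lam → e = f
    · exact IsGrape.atMostOneVertex _ hone
    push_neg at hone
    obtain ⟨e1, e2, he1, he2, hne⟩ := hone
    set K := BD G lam with hK
    set G' := SimpleGraph.fromEdgeSet {e : Sym2 V | {e} ∈ K} with hG'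
    have hG'le : G' ≤ G := by
      intro x y hxy
      rw [hG', SimpleGraph.fromEdgeSet_adj] at hxy
      exact (G.mem_edgeSet).mp (hxy.1.1 (by simp))
    have hG'E : G'.edgeSet = {e : Sym2 V | {e} ∈ K} := by
      rw [hG', SimpleGraph.edgeSet_fromEdgeSet]
      ext e
      simp only [Set.mem_diff, Set.mem_setOf_eq, and_iff_left_iff_imp]
      exact fun he => G.not_isDiag_of_mem_edgeSet (he.1 (by simp))
    have hG'ac : G'.IsAcyclic := fun v c hc => hac _ (hc.mapLe hG'le)
    obtain ⟨x, u, a, hadj, haE', hab, hxuniq0, huor0⟩ :=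
      exists_pendant hG'ac (by rw [hG'E]; exact he1) (by rw [hG'E]; exact he2) hne
    rw [hG'E] at haE'
    have ha' : {a} ∈ K := haE'
    have hb : {s(x, u)} ∈ K := by
      have : s(x, u) ∈ G'.edgeSet := G'.mem_edgeSet.mpr hadj
      rwa [hG'E] at this
    have hxuniq : ∀ e, {e} ∈ K → x ∈ e → e = s(x, u) := by
      intro e he hxe
      exact hxuniq0 e (by rw [hG'E]; exact he) hxe
    have huor : u ∈ a ∨ ∀ e, {e} ∈ K → u ∈ e → e = s(x, u) := by
      rcases huor0 with h | h
      · exact Or.inl h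
      · exact Or.inr fun e he hue => h e (by rw [hG'E]; exact he) hue
    have haE : a ∈ G.edgeSet := ha'.1 (by simp)
    have lamx : 1 ≤ lam x := lam_pos_of_singleton hb (by simp)
    have lamu : 1 ≤ lam u := lam_pos_of_singleton hb (by simp)
    have husable : ∀ {τ : Finset (Sym2 V)}, τ ∈ K → ∀ {e}, e ∈ τ → {e} ∈ K :=
      fun hτ _ he => BD_subset (Finset.singleton_subset_iff.mpr he) hτ
    have hdeg0 : ∀ {τ : Finset (Sym2 V)} {v : V}, τ ∈ K → s(x, u) ∉ τ →
        (∀ e, {e} ∈ K → v ∈ e → e = s(x, u)) → edgeDeg τ v = 0 := by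
      intro τ v hτ hbτ huniq
      unfold edgeDeg
      rw [Finset.card_eq_zero, Finset.filter_eq_empty_iff]
      intro e he hve
      exact hbτ ((huniq e (husable hτ he) hve) ▸ he)
    have key : ∀ τ ∈ linkC K a, insert s(x, u) τ ∈ delC K a := by
      rintro τ ⟨hτ, haτ, hins⟩
      by_cases hbτ : s(x, u) ∈ τ
      · rw [Finset.insert_eq_self.mpr hbτ]; exact ⟨hτ, haτ⟩
      refine ⟨⟨?_, ?_⟩, ?_⟩
      · rw [Finset.coe_insert]
        exact Set.insert_subset (hb.1 (by simp)) hτ.1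
      · intro v
        rw [edgeDeg_insert hbτ]
        by_cases hv : v ∈ s(x, u)
        · rw [if_pos hv]
          rw [Sym2.mem_iff] at hv
          rcases hv with rfl | rfl
          · rw [hdeg0 hτ hbτ hxuniq]; omega
          · rcases huor with hu | hu
            · have hd := hins.2 v
              rw [edgeDeg_insert haτ, if_pos hu] at hd
              omega
            · rw [hdeg0 hτ hbτ hu]; omega
        · rw [if_neg hv]
          simpa using hτ.2 v
      · rw [Finset.mem_insert]
        rintro (rfl | hc)
        · exact hab rfl
        · exact haτ hc
    refine IsGrape.wedge K a ha'
      ⟨s(x, u), {σ | s(x, u) ∉ σ ∧ insert s(x, u) σ ∈ delC K a}, ?_, ?_⟩ ?_ ?_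
    · intro τ hτl
      refine ⟨τ.erase s(x, u), ⟨Finset.notMem_erase _ _, ?_⟩, τ ∩ {s(x, u)},
        Finset.inter_subset_right, ?_⟩
      · have heq : insert s(x, u) (τ.erase s(x, u)) = insert s(x, u) τ := by
          by_cases hbτ : s(x, u) ∈ τ
          · rw [Finset.insert_erase hbτ, Finset.insert_eq_self.mpr hbτ]
          · rw [Finset.erase_eq_of_notMem hbτ]
        rw [heq]
        exact key τ hτl
      · ext e
        simp only [Finset.mem_union, Finset.mem_erase, Finset.mem_inter, Finset.mem_singleton]
        by_cases he : e = s(x, u) <;> simp [he]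
    · rintro σ ⟨τ, ⟨hbτ, hins⟩, s, hs, rfl⟩
      have hsub : τ ∪ s ⊆ insert s(x, u) τ :=
        Finset.union_subset (Finset.subset_insert _ _)
          (hs.trans (Finset.singleton_subset_iff.mpr (Finset.mem_insert_self _ _)))
      exact ⟨BD_subset hsub hins.1, fun hc => hins.2 (hsub hc)⟩
    all_goals {
      have hcard' : (G.deleteEdges {a}).edgeSet.ncard ≤ n := by
        rw [SimpleGraph.edgeSet_deleteEdges]
        have hlt : (G.edgeSet \ {a}).ncard < G.edgeSet.ncard :=
          Set.ncard_lt_ncard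
            ((Set.ssubset_iff_of_subset Set.diff_subset).mpr ⟨a, haE, by simp⟩)
            (Set.toFinite _)
        omega
      have hac' : (G.deleteEdges {a}).IsAcyclic :=
        fun v c hc => hac _ (hc.mapLe (G.deleteEdges_le _))
      first
        | (rw [hK, linkC_BD ha']; exact ih _ hcard' hac' _)
        | (rw [hK, delC_BD]; exact ih _ hcard' hac' _)
    }

/-- the bounded degree complex of a forest is a combinatorial grape. -/
theorem BD_forest_isGrape {V : Type*} [Fintype V] [DecidableEq V]
    (G : SimpleGraph V) (hG : G.IsAcyclic) (lam : V → ℕ) :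
    IsGrape (BD G lam) := by
  exact BD_main G.edgeSet.ncard G le_rfl hG lam
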